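/- Let E be an n × n max-plus idempotent matrix of tropical rank n (strongly regular). Then every diagonal entry of E equals 0. -/

import Mathlib

open scoped BigOperators

/-- Max-plus matrix product over ℝ. -/
noncomputable def tmul {n : ℕ} (A B : Fin n → Fin n → ℝ) : Fin n → Fin n → ℝ :=
  fun i j => ⨆ k, A i k + B k j

/-- Max-plus idempotency. -/
def IsTropIdem {n : ℕ} (A : Fin n → Fin n → ℝ) : Prop := tmul A A = A

/-- Tropical permanent. -/
noncomputable def tperm {n : ℕ} (A : Fin n → Fin n → ℝ) : ℝ :=
  ⨆ σ : Equiv.Perm (Fin n), ∑ i, A i (σ i)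

/-- The tropical permanent is attained by a unique permutation. -/
def UniqPerm {n : ℕ} (A : Fin n → Fin n → ℝ) : Prop :=
  ∃! σ : Equiv.Perm (Fin n), ∑ i, A i (σ i) = tperm A

/-- Tropical rank: the largest size of a square minor whose tropical
permanent is attained by a unique permutation. -/
noncomputable def tropRank {n : ℕ} (A : Fin n → Fin n → ℝ) : ℕ :=
  sSup {k : ℕ | ∃ r c : Fin k ↪ Fin n, UniqPerm (fun i j => A (r i) (c j))}

/-- Column space: all max-plus linear combinations of the columns. -/
def colSpace {n : ℕ} (A : Fin n → Fin n → ℝ) : Set (Fin n → ℝ) :=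
  {x | ∃ lam : Fin n → ℝ, ∀ i, x i = ⨆ j, lam j + A i j}

/-- Residuation distance δ(x,y) = max_k (x_k - y_k). -/
noncomputable def tdelta {n : ℕ} (x y : Fin n → ℝ) : ℝ := ⨆ k, (x k - y k)

/-- Residuation operator ⟨x∣y⟩ = min_k (y_k - x_k). -/
noncomputable def tresid {n : ℕ} (x y : Fin n → ℝ) : ℝ := ⨅ k, (y k - x k)

/-- Tropical Hilbert projective metric. -/
noncomputable def tHilbert {n : ℕ} (x y : Fin n → ℝ) : ℝ :=
  (tdelta x y + tdelta y x) / 2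

/-- Any `0 × 0` matrix satisfies `UniqPerm`. -/
lemma uniqPerm_zero (A : Fin 0 → Fin 0 → ℝ) : UniqPerm A := by
  have huniq : ∀ ρ : Equiv.Perm (Fin 0), ρ = 1 := fun ρ => Equiv.ext fun x => x.elim0
  have hz : ∀ σ : Equiv.Perm (Fin 0), (∑ i : Fin 0, A i (σ i)) = 0 := fun σ => by simp
  refine ⟨1, ?_, fun ρ _ => huniq ρ⟩
  show (∑ i : Fin 0, A i ((1 : Equiv.Perm (Fin 0)) i)) = tperm A
  rw [hz]
  unfold tperm
  rw [show (fun σ : Equiv.Perm (Fin 0) => ∑ i, A i (σ i)) = fun _ => (0:ℝ) from funext hz]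
  exact ciSup_const.symm

/-- Transfer of `UniqPerm` from a full-size minor to the matrix itself. -/
lemma uniqPerm_of_minor {n : ℕ} (E : Fin n → Fin n → ℝ) (r c : Fin n ↪ Fin n)
    (hUP : UniqPerm (fun i j => E (r i) (c j))) : UniqPerm E := by
  classical
  have hrb : Function.Bijective r := Finite.injective_iff_bijective.mp r.injective
  have hcb : Function.Bijective c := Finite.injective_iff_bijective.mp c.injective
  let re : Fin n ≃ Fin n := Equiv.ofBijective _ hrb
  let ce : Fin n ≃ Fin n := Equiv.ofBijective _ hcb
  let θ : Equiv.Perm (Fin n) ≃ Equiv.Perm (Fin n) :=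
    { toFun := fun π => (re.symm.trans π).trans ce
      invFun := fun ρ => (re.trans ρ).trans ce.symm
      left_inv := fun π => Equiv.ext fun x => by simp [re, ce]
      right_inv := fun ρ => Equiv.ext fun x => by simp [re, ce] }
  have hsum : ∀ π : Equiv.Perm (Fin n),
      ∑ i, E (r i) (c (π i)) = ∑ i, E i ((θ π) i) := by
    intro π
    refine Fintype.sum_equiv re _ _ fun i => ?_
    show E (r i) (c (π i)) = E (re i) (ce (π (re.symm (re i))))
    simp only [Equiv.symm_apply_apply]
    rfl
  have htp : tperm (fun i j => E (r i) (c j)) = tperm E := by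
    have h1 : tperm (fun i j => E (r i) (c j))
        = ⨆ π : Equiv.Perm (Fin n), ∑ i, E i ((θ π) i) := by
      unfold tperm
      simp only [hsum]
    rw [h1]
    show ⨆ π, (fun ρ : Equiv.Perm (Fin n) => ∑ i, E i (ρ i)) (θ π) = _
    unfold tperm
    rw [← sSup_range, ← sSup_range]
    congr 1
    exact Function.Surjective.range_comp θ.surjective (fun ρ : Equiv.Perm (Fin n) => ∑ i, E i (ρ i))
  obtain ⟨π₀, h₀, hu₀⟩ := hUP
  refine ⟨θ π₀, ?_, ?_⟩
  · show ∑ i, E i ((θ π₀) i) = tperm E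
    rw [← htp, ← hsum]
    exact h₀
  · intro ρ hρ
    have hρ' : ∑ i, E (r i) (c ((θ.symm ρ) i)) = tperm (fun i j => E (r i) (c j)) := by
      rw [htp, hsum (θ.symm ρ), θ.apply_symm_apply]
      exact hρ
    have hps : θ.symm ρ = π₀ := hu₀ (θ.symm ρ) hρ'
    calc ρ = θ (θ.symm ρ) := (θ.apply_symm_apply ρ).symm
    _ = θ π₀ := congrArg θ hps

theorem stmt3 (n : ℕ) (hn : 0 < n) (E : Fin n → Fin n → ℝ)
    (hidem : IsTropIdem E) (hrank : tropRank E = n) :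
    ∀ i, E i i = 0 := by
  classical
  have hne : Nonempty (Fin n) := ⟨⟨0, hn⟩⟩
  -- pointwise consequences of idempotency
  have hid : ∀ i k j, E i k + E k j ≤ E i j := by
    intro i k j
    have h1 : tmul E E i j = E i j := by rw [hidem]
    rw [← h1]
    show E i k + E k j ≤ ⨆ m, E i m + E m j
    exact le_ciSup (Set.Finite.bddAbove (Set.finite_range fun m => E i m + E m j)) k
  have hatt : ∀ i j, ∃ k, E i j = E i k + E k j := by
    intro i j
    obtain ⟨k, hk⟩ := Finite.exists_max (fun k => E i k + E k j)
    refine ⟨k, le_antisymm ?_ (hid i k j)⟩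
    have h1 : tmul E E i j = E i j := by rw [hidem]
    rw [← h1]
    show (⨆ m, E i m + E m j) ≤ E i k + E k j
    exact ciSup_le hk
  have hdle : ∀ i, E i i ≤ 0 := fun i => by have := hid i i i; linarith
  -- extract uniqueness of the optimal permutation from tropRank E = n
  have hUPE : UniqPerm E := by
    set S : Set ℕ :=
      {k : ℕ | ∃ r c : Fin k ↪ Fin n, UniqPerm (fun i j => E (r i) (c j))} with hSdef
    have h0 : (0 : ℕ) ∈ S := by
      exact ⟨⟨Fin.elim0, fun a => a.elim0⟩, ⟨Fin.elim0, fun a => a.elim0⟩, uniqPerm_zero _⟩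
    have hbddS : BddAbove S := by
      refine ⟨n, fun k hk => ?_⟩
      obtain ⟨r, -, -⟩ := hk
      simpa using Fintype.card_le_of_embedding r
    have hnmem : n ∈ S := by
      have h := Nat.sSup_mem ⟨0, h0⟩ hbddS
      have : sSup S = n := hrank
      rwa [this] at h
    obtain ⟨r, c, hUP⟩ := hnmem
    exact uniqPerm_of_minor E r c hUP
  obtain ⟨σ, hσ, hu⟩ := hUPE
  have hbddP : BddAbove (Set.range fun ρ : Equiv.Perm (Fin n) => ∑ i, E i (ρ i)) :=
    Set.Finite.bddAbove (Set.finite_range _)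
  have hle : ∀ ρ : Equiv.Perm (Fin n), ∑ i, E i (ρ i) ≤ tperm E := fun ρ =>
    le_ciSup hbddP ρ
  -- the key inequality from uniqueness
  have key : ∀ p q : Fin n, p ≠ q →
      E p (σ q) + E q (σ p) < E p (σ p) + E q (σ q) := by
    intro p q hpq
    set σ' : Equiv.Perm (Fin n) := (Equiv.swap p q).trans σ with hσ'def
    have hne' : σ' ≠ σ := by
      intro h
      have h1 : σ' p = σ p := by rw [h]
      have h2 : σ q = σ p := by
        simpa [σ', Equiv.swap_apply_left] using h1
      exact hpq (σ.injective h2).symm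
    have hgp : σ' p = σ q := by simp [σ', Equiv.swap_apply_left]
    have hgq : σ' q = σ p := by simp [σ', Equiv.swap_apply_right]
    have hgoth : ∀ i, i ≠ p → i ≠ q → σ' i = σ i := by
      intro i hip hiq
      simp [σ', Equiv.swap_apply_of_ne_of_ne hip hiq]
    -- sum comparison
    have hsum' : ∑ i, E i (σ' i)
        = ∑ i, E i (σ i) + (E p (σ q) - E p (σ p)) + (E q (σ p) - E q (σ q)) := by
      have hgsum : ∑ i, (E i (σ' i) - E i (σ i))
          = (E p (σ' p) - E p (σ p)) + (E q (σ' q) - E q (σ q)) := by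
        rw [← Finset.add_sum_erase _ _ (Finset.mem_univ p)]
        have hqmem : q ∈ Finset.univ.erase p :=
          Finset.mem_erase.mpr ⟨hpq.symm, Finset.mem_univ q⟩
        rw [← Finset.add_sum_erase _ _ hqmem]
        have hz : ∑ i ∈ (Finset.univ.erase p).erase q, (E i (σ' i) - E i (σ i)) = 0 := by
          refine Finset.sum_eq_zero fun i hi => ?_
          have hiq : i ≠ q := (Finset.mem_erase.mp hi).1
          have hip : i ≠ p := (Finset.mem_erase.mp (Finset.mem_erase.mp hi).2).1
          rw [hgoth i hip hiq, sub_self]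
        rw [hz]
        ring
      have hsub : ∑ i, (E i (σ' i) - E i (σ i)) = ∑ i, E i (σ' i) - ∑ i, E i (σ i) :=
        Finset.sum_sub_distrib _ _
      rw [hsub, hgp, hgq] at hgsum
      linarith
    have hlt : ∑ i, E i (σ' i) < tperm E := by
      rcases lt_or_eq_of_le (hle σ') with h | h
      · exact h
      · exact absurd (hu σ' h) hne'
    rw [← hσ] at hlt
    rw [hsum'] at hlt
    linarith
  -- the optimal permutation is the identity
  have hfix : ∀ p, σ p = p := by
    intro p
    by_contra hp
    -- E p p < 0
    have hq : σ.symm p ≠ p := by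
      intro h
      apply hp
      conv_lhs => rw [← h]
      exact σ.apply_symm_apply p
    have k1 := key p (σ.symm p) (Ne.symm hq)
    rw [σ.apply_symm_apply] at k1
    have i1 := hid (σ.symm p) p (σ p)
    have hpp : E p p < 0 := by linarith
    -- E (σ p) (σ p) < 0
    have hsj : σ (σ p) ≠ σ p := fun h => hp (σ.injective h)
    have k2 := key (σ p) p hp
    have i2 := hid p (σ p) (σ (σ p))
    have hjj : E (σ p) (σ p) < 0 := by linarith
    -- attainment witness for the edge p → σ p
    obtain ⟨k, hk⟩ := hatt p (σ p)
    by_cases hkp : k = p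
    · rw [hkp] at hk
      linarith
    by_cases hkj : k = σ p
    · rw [hkj] at hk
      linarith
    have hqp : σ.symm k ≠ p := by
      intro h
      apply hkj
      have : σ (σ.symm k) = σ p := by rw [h]
      rwa [σ.apply_symm_apply] at this
    have k3 := key p (σ.symm k) (Ne.symm hqp)
    rw [σ.apply_symm_apply] at k3
    have i3 := hid (σ.symm k) k (σ p)
    linarith
  -- conclude: all diagonal entries vanish
  intro i
  obtain ⟨k, hk⟩ := hatt i i
  by_cases hki : k = i
  · subst hki
    linarith
  · exfalso
    have k4 := key i k fun h => hki h.symm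
    rw [hfix i, hfix k] at k4
    have := hdle k
    linarith
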